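/- Let C = (Z, N, Q, δ) be a one-dimensional cellular automaton with N ⊆ {−m,…,m}, N ≠ ∅. For any configuration c ∈ Q^Z there exists a 'spatially eventually periodic' configuration c' ∈ Q^Z agreeing with c on {β'−m, …, α'+m} (for suitable −|Q|^{2m+1} ≤ β' < α' ≤ |Q|^{2m+1} obtained by pigeonhole on windows of width 2m+1) such that every cell a' ∈ Z of c' observes the same local window as some cell a ∈ {β', …, α'} of c: c'[a'−m, a'+m] = c[a−m, a+m]. -/

import Mathlib

noncomputable section
open scoped Classical

/-- The global transition function `Δ_A` of a one-dimensional CA with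
neighborhood `N ⊆ ℤ`, local rule `δ` and active cell set `A`. -/
def stepZ {Q : Type*} (N : Finset ℤ) (δ : (↥N → Q) → Q)
    (A : Set ℤ) (c : ℤ → Q) : ℤ → Q :=
  fun i => if i ∈ A then δ (fun n => c (i + n.1)) else c i

/-- The difference set `D_{c,c'}` of two global configurations. -/
def diffSetZ {Q : Type*} (c c' : ℤ → Q) : Set ℤ := {i | c i ≠ c' i}

/-- Two fully asynchronous one-dimensional CAs are inverse to each other. -/
def FullInverseZ {Q : Type*} (N M : Finset ℤ)
    (δ : (↥N → Q) → Q) (γ : (↥M → Q) → Q) : Prop :=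
  ∀ c c' : ℤ → Q,
    (∃ a : ℤ, c' = stepZ N δ {a} c) ↔ (∃ a : ℤ, c = stepZ M γ {a} c')

/-- The maximal distance `m` of a neighbor (`0` used in place of `-∞` for `N = ∅`). -/
def mrad (N : Finset ℤ) : ℕ := N.sup fun n => n.natAbs

/-- The finite set `𝒜` of active candidate cells:
`{-|Q|^(2m+1), …, |Q|^(2m+1)}`, or `{0}` when `N = ∅`. -/
def Acand (Q : Type*) [Fintype Q] (N : Finset ℤ) : Set ℤ :=
  if N = ∅ then {0}
  else {a : ℤ | |a| ≤ (Fintype.card Q : ℤ) ^ (2 * mrad N + 1)}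

/-- For any configuration `c` there is a spatially eventually periodic
configuration `c'` agreeing with `c` on `{β'−m, …, α'+m}` such that every cell
of `c'` observes the same local window as some cell `a ∈ {β', …, α'}` of `c`. -/
private lemma pigeonQ {Q : Type*} [Fintype Q] [Nonempty Q] (m : ℕ) (c : ℤ → Q) (a : ℤ) :
    ∃ x y : ℤ, a ≤ x ∧ x < y ∧ y ≤ a + (Fintype.card Q : ℤ) ^ (2 * m + 1) ∧
      ∀ k : ℤ, |k| ≤ (m : ℤ) → c (x + k) = c (y + k) := by
  classical
  set K : ℤ := (Fintype.card Q : ℤ) ^ (2 * m + 1) with hKdef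
  have hKnat : K = ((Fintype.card Q ^ (2 * m + 1) : ℕ) : ℤ) := by push_cast [hKdef]; ring
  have hcard : (Finset.univ : Finset (Fin (2 * m + 1) → Q)).card <
      (Finset.Icc a (a + K)).card := by
    rw [Finset.card_univ, Fintype.card_fun, Fintype.card_fin, Int.card_Icc]
    have h1 : a + K + 1 - a = K + 1 := by ring
    rw [h1, hKnat]
    omega
  obtain ⟨x, hx, y, hy, hne, hfe⟩ :=
    Finset.exists_ne_map_eq_of_card_lt_of_maps_to hcard
      (f := fun i (t : Fin (2 * m + 1)) => c (i + t.1 - m))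
      (fun i _ => Finset.mem_univ _)
  rw [Finset.mem_Icc] at hx hy
  have key : ∀ u v : ℤ, ((fun (t : Fin (2 * m + 1)) => c (u + t.1 - m)) =
      fun (t : Fin (2 * m + 1)) => c (v + t.1 - m)) →
      ∀ k : ℤ, |k| ≤ (m : ℤ) → c (u + k) = c (v + k) := by
    intro u v h k hk
    rw [abs_le] at hk
    have hkm : (0 : ℤ) ≤ k + m := by omega
    have hlt : (k + m).toNat < 2 * m + 1 := by omega
    have h2 := congrFun h ⟨(k + m).toNat, hlt⟩
    simpa [Int.toNat_of_nonneg hkm, show u + (k + m) - m = u + k by ring,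
      show v + (k + m) - m = v + k by ring] using h2
  rcases lt_or_gt_of_ne hne with h | h
  · exact ⟨x, y, hx.1, h, hy.2, key x y hfe⟩
  · exact ⟨y, x, hy.1, h, hx.2, key y x hfe.symm⟩

theorem eventually_periodic_witness {Q : Type*} [Fintype Q]
    (N : Finset ℤ) (hN : N.Nonempty) (m : ℕ) (hNm : ∀ n ∈ N, n.natAbs ≤ m)
    (c : ℤ → Q) :
    ∃ (c' : ℤ → Q) (β' α' : ℤ),
      -((Fintype.card Q : ℤ) ^ (2 * m + 1)) ≤ β' ∧ β' < α' ∧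
      α' ≤ (Fintype.card Q : ℤ) ^ (2 * m + 1) ∧
      (∀ i : ℤ, β' - m ≤ i → i ≤ α' + m → c' i = c i) ∧
      (∀ a' : ℤ, ∃ a : ℤ, β' ≤ a ∧ a ≤ α' ∧
        ∀ k : ℤ, |k| ≤ (m : ℤ) → c' (a' + k) = c (a + k)) := by
  classical
  have hQne : Nonempty Q := ⟨c 0⟩
  set K : ℤ := (Fintype.card Q : ℤ) ^ (2 * m + 1) with hKdef
  obtain ⟨α, α', hα0, hαα', hα'K, hwr⟩ := pigeonQ m c 0
  obtain ⟨β', β, hβ'lb, hβ'β, hβub, hwl⟩ := pigeonQ m c (-K)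
  have hβ0 : β ≤ 0 := by omega
  set p : ℤ := α' - α with hpdef
  set q : ℤ := β - β' with hqdef
  have hp : 0 < p := by omega
  have hq : 0 < q := by omega
  have hmodp : ∀ x : ℤ, 0 ≤ x % p ∧ x % p < p :=
    fun x => ⟨Int.emod_nonneg x hp.ne', Int.emod_lt_of_pos x hp⟩
  have hmodq : ∀ x : ℤ, 0 ≤ x % q ∧ x % q < q :=
    fun x => ⟨Int.emod_nonneg x hq.ne', Int.emod_lt_of_pos x hq⟩
  set c' : ℤ → Q := fun i => if α' < i then c (α + 1 + (i - α - 1) % p)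
    else if i < β' then c (β' + (i - β') % q) else c i with hc'
  -- right reduction lemma
  have hR : ∀ n : ℕ, ∀ i : ℤ, (i - α).toNat = n → α < i → i ≤ α' + m →
      c (α + 1 + (i - α - 1) % p) = c i := by
    intro n
    induction n using Nat.strong_induction_on with
    | _ n ih =>
      intro i hn h1 h2
      by_cases hc2 : i ≤ α'
      · have hmod : (i - α - 1) % p = i - α - 1 :=
          Int.emod_eq_of_lt (by omega) (by omega)
        rw [hmod]
        congr 1
        ring
      · push_neg at hc2
        have hstep : c (i - p) = c i := by
          have h3 := hwr (i - α') (by rw [abs_le]; omega)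
          have e1 : α + (i - α') = i - p := by omega
          have e2 : α' + (i - α') = i := by ring
          rw [e1, e2] at h3
          exact h3
        have hmod : (i - p - α - 1) % p = (i - α - 1) % p := by
          have e : i - p - α - 1 = (i - α - 1) - p := by ring
          rw [e, Int.sub_emod_right]
        rw [← hmod, ← hstep]
        exact ih (i - p - α).toNat (by omega) _ rfl (by omega) (by omega)
  -- left reduction lemma
  have hL : ∀ n : ℕ, ∀ i : ℤ, (β - i).toNat = n → β' - m ≤ i → i < β →
      c (β' + (i - β') % q) = c i := by
    intro n
    induction n using Nat.strong_induction_on with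
    | _ n ih =>
      intro i hn h1 h2
      by_cases hc2 : β' ≤ i
      · have hmod : (i - β') % q = i - β' :=
          Int.emod_eq_of_lt (by omega) (by omega)
        rw [hmod]
        congr 1
        ring
      · push_neg at hc2
        have hstep : c (i + q) = c i := by
          have h3 := hwl (i - β') (by rw [abs_le]; omega)
          have e1 : β' + (i - β') = i := by ring
          have e2 : β + (i - β') = i + q := by omega
          rw [e1, e2] at h3
          exact h3.symm
        have hmod : (i + q - β') % q = (i - β') % q := by
          have e : i + q - β' = (i - β') + q := by ring
          rw [e, Int.add_emod_right]
        rw [← hmod, ← hstep]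
        exact ih (β - (i + q)).toNat (by omega) _ rfl (by omega) (by omega)
  -- agreement on the central window
  have hA : ∀ i : ℤ, β' - (m : ℤ) ≤ i → i ≤ α' + m → c' i = c i := by
    intro i h1 h2
    simp only [hc']
    split_ifs with h3 h4
    · exact hR _ _ rfl (by omega) h2
    · exact hL _ _ rfl h1 (by omega)
    · rfl
  -- right periodicity
  have hPr : ∀ j : ℤ, α - (m : ℤ) < j → c' (j + p) = c' j := by
    intro j hj
    simp only [hc']
    by_cases h1 : α' < j
    · rw [if_pos (by omega), if_pos h1]
      congr 2
      have e : j + p - α - 1 = (j - α - 1) + p := by ring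
      rw [e, Int.add_emod_right]
    · push_neg at h1
      by_cases h2 : α < j
      · rw [if_pos (by omega), if_neg (by omega), if_neg (by omega)]
        have hmod : (j + p - α - 1) % p = (j - α - 1) % p := by
          have e : j + p - α - 1 = (j - α - 1) + p := by ring
          rw [e, Int.add_emod_right]
        rw [hmod]
        exact hR _ _ rfl h2 (by omega)
      · push_neg at h2
        have hcp : c (j + p) = c j := by
          have h3 := hwr (j - α) (by rw [abs_le]; omega)
          have e1 : α + (j - α) = j := by ring
          have e2 : α' + (j - α) = j + p := by omega
          rw [e1, e2] at h3
          exact h3.symm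
        by_cases h3 : β' ≤ j
        · rw [if_neg (by omega), if_neg (by omega), if_neg (by omega), if_neg (by omega)]
          exact hcp
        · push_neg at h3
          have hcj : c (β' + (j - β') % q) = c j := hL _ _ rfl (by omega) (by omega)
          by_cases h4 : j + p < β'
          · rw [if_neg (by omega), if_pos h4, if_neg (by omega), if_pos h3]
            have h5 : c (β' + (j + p - β') % q) = c (j + p) :=
              hL _ _ rfl (by omega) (by omega)
            exact h5.trans (hcp.trans hcj.symm)
          · push_neg at h4
            rw [if_neg (by omega), if_neg (by omega), if_neg (by omega), if_pos h3]
            exact hcp.trans hcj.symm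
  -- left periodicity
  have hPl : ∀ j : ℤ, j < β + (m : ℤ) → c' (j - q) = c' j := by
    intro j hj
    simp only [hc']
    by_cases h1 : j < β'
    · rw [if_neg (by omega), if_pos (by omega), if_neg (by omega), if_pos h1]
      congr 2
      have e : j - q - β' = (j - β') - q := by ring
      rw [e, Int.sub_emod_right]
    · push_neg at h1
      by_cases h2 : j < β
      · rw [if_neg (by omega), if_pos (by omega), if_neg (by omega), if_neg (by omega)]
        have hmod : (j - q - β') % q = (j - β') % q := by
          have e : j - q - β' = (j - β') - q := by ring
          rw [e, Int.sub_emod_right]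
        rw [hmod]
        exact hL _ _ rfl (by omega) h2
      · push_neg at h2
        have hstep : c (j - q) = c j := by
          have h3 := hwl (j - β) (by rw [abs_le]; omega)
          have e1 : β' + (j - β) = j - q := by omega
          have e2 : β + (j - β) = j := by ring
          rw [e1, e2] at h3
          exact h3
        by_cases h3 : α' < j
        · have hcj : c (α + 1 + (j - α - 1) % p) = c j := hR _ _ rfl (by omega) (by omega)
          by_cases h4 : α' < j - q
          · rw [if_pos h4, if_pos h3]
            have h5 : c (α + 1 + (j - q - α - 1) % p) = c (j - q) :=
              hR _ _ rfl (by omega) (by omega)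
            exact h5.trans (hstep.trans hcj.symm)
          · push_neg at h4
            rw [if_neg (by omega), if_neg (by omega), if_pos h3]
            exact hstep.trans hcj.symm
        · push_neg at h3
          rw [if_neg (by omega), if_neg (by omega), if_neg (by omega), if_neg (by omega)]
          exact hstep
  refine ⟨c', β', α', by omega, by omega, by omega, hA, ?_⟩
  intro a'
  by_cases h1 : α' < a'
  · -- reduce from the right
    have hm1 := hmodp (a' - α - 1)
    set a : ℤ := α + 1 + (a' - α - 1) % p with hadef
    have key : ∀ t : ℕ, ∀ k : ℤ, |k| ≤ (m : ℤ) → c' (a + k + p * t) = c (a + k) := by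
      intro t
      induction t with
      | zero =>
        intro k hk
        rw [abs_le] at hk
        simpa using hA (a + k) (by omega) (by omega)
      | succ t ih =>
        intro k hk
        have habs := abs_le.mp hk
        have hpt : (0 : ℤ) ≤ p * t := by positivity
        have e : a + k + p * ((t : ℕ) + 1 : ℕ) = (a + k + p * t) + p := by push_cast; ring
        rw [e, hPr _ (by omega)]
        exact ih k hk
    have hdiv := Int.mul_ediv_add_emod (a' - α - 1) p
    set td : ℤ := (a' - α - 1) / p with htddef
    have htd : 0 ≤ td := Int.ediv_nonneg (by omega) hp.le
    have ht : a' = a + p * td := by linarith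
    refine ⟨a, by omega, by omega, ?_⟩
    intro k hk
    have e : a' + k = a + k + p * (td.toNat : ℤ) := by
      rw [Int.toNat_of_nonneg htd]
      linarith
    rw [e]
    exact key td.toNat k hk
  · push_neg at h1
    by_cases h2 : a' < β'
    · -- reduce from the left
      have hm1 := hmodq (a' - β')
      set a : ℤ := β' + (a' - β') % q with hadef
      have key : ∀ t : ℕ, ∀ k : ℤ, |k| ≤ (m : ℤ) → c' (a + k - q * t) = c (a + k) := by
        intro t
        induction t with
        | zero =>
          intro k hk
          rw [abs_le] at hk
          simpa using hA (a + k) (by omega) (by omega)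
        | succ t ih =>
          intro k hk
          have habs := abs_le.mp hk
          have hqt : (0 : ℤ) ≤ q * t := by positivity
          have e : a + k - q * ((t : ℕ) + 1 : ℕ) = (a + k - q * t) - q := by push_cast; ring
          rw [e, hPl _ (by omega)]
          exact ih k hk
      have hdiv := Int.mul_ediv_add_emod (a' - β') q
      set td : ℤ := (a' - β') / q with htddef
      have htd : td ≤ 0 := by
        by_contra hcon
        push_neg at hcon
        have h5 : q * 1 ≤ q * td := by
          apply mul_le_mul_of_nonneg_left (by omega) hq.le
        nlinarith
      have ht : a' = a + q * td := by linarith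
      refine ⟨a, by omega, by omega, ?_⟩
      intro k hk
      have e : a' + k = a + k - q * ((-td).toNat : ℤ) := by
        rw [Int.toNat_of_nonneg (by omega : (0:ℤ) ≤ -td)]
        linarith
      rw [e]
      exact key (-td).toNat k hk
    · push_neg at h2
      refine ⟨a', h2, h1, ?_⟩
      intro k hk
      rw [abs_le] at hk
      exact hA (a' + k) (by omega) (by omega)
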